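/- Let x_σ ∈ End(V) be a nilpotent endomorphism of Jordan type μ^⊥ (the dual of μ) and suppose λ is a partition refinement data with dual partition contribution making (x_σ, V̲) a stable pair for a flag V̲ of type λ. If the flag V̲ of type λ stabilized by x_σ (in the sense x_σ(V_j) ⊆ V_{j+1}) is unique, then for the middle subspace V_2 of V̲, the restriction x_σ|_{V_2} has Jordan type λ_2^⊥. -/

import Mathlib

open Module

/-- A flag of type `(λ₁, λ₂)` (the concatenation of the part lists `l₁`, `l₂`),
together with the stability condition `x (V_j) ⊆ V_{j+1}`; encoded as a
decreasing chain `F 0 = V ⊇ F 1 ⊇ ⋯ ⊇ F r = 0` (`r` the total number of parts)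
with `dim (F j / F (j+1))` the `j`-th part. -/
def IsStableFlagOfType {V : Type} [AddCommGroup V] [Module ℂ V]
    (x : Module.End ℂ V) (parts : List ℕ) (F : ℕ → Submodule ℂ V) : Prop :=
  F 0 = ⊤ ∧ (∀ j, F (j + 1) ≤ F j) ∧ (∀ j, parts.length ≤ j → F j = ⊥) ∧
    (∀ j < parts.length,
      finrank ℂ (F j) = finrank ℂ (F (j + 1)) + parts.getD j 0) ∧
    ∀ j, Submodule.map x (F j) ≤ F (j + 1)

namespace StableFlagAux

open Submodule LinearMap

variable {V : Type} [AddCommGroup V] [Module ℂ V]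

lemma coe_pow_restrict (x : Module.End ℂ V) {p : Submodule ℂ V}
    (h : ∀ v ∈ p, x v ∈ p) (k : ℕ) (w : p) :
    ((((x.restrict h) ^ k) w : p) : V) = (x ^ k) (w : V) := by
  induction k generalizing w with
  | zero => simp
  | succ k ih =>
    rw [pow_succ, pow_succ, Module.End.mul_apply, Module.End.mul_apply, ih,
      LinearMap.restrict_coe_apply]

lemma map_ker_pow_restrict (x : Module.End ℂ V) {p : Submodule ℂ V}
    (h : ∀ v ∈ p, x v ∈ p) (k : ℕ) :
    Submodule.map p.subtype (LinearMap.ker ((x.restrict h) ^ k))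
      = LinearMap.ker (x ^ k) ⊓ p := by
  ext v
  simp only [Submodule.mem_map, LinearMap.mem_ker, Submodule.mem_inf]
  constructor
  · rintro ⟨w, hw, rfl⟩
    refine ⟨?_, w.2⟩
    have hc := coe_pow_restrict x h k w
    rw [hw] at hc
    simpa using hc.symm
  · rintro ⟨hv, hvp⟩
    refine ⟨⟨v, hvp⟩, ?_, rfl⟩
    have hc := coe_pow_restrict x h k ⟨v, hvp⟩
    exact Subtype.ext (by rw [hc]; exact hv)

lemma map_range_restrict (x : Module.End ℂ V) {p : Submodule ℂ V}
    (h : ∀ v ∈ p, x v ∈ p) :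
    Submodule.map p.subtype (LinearMap.range (x.restrict h)) = Submodule.map x p := by
  ext v
  simp only [Submodule.mem_map, LinearMap.mem_range]
  constructor
  · rintro ⟨w, ⟨u, rfl⟩, rfl⟩
    exact ⟨↑u, u.2, (LinearMap.restrict_coe_apply x h u).symm⟩
  · rintro ⟨u, hu, rfl⟩
    exact ⟨x.restrict h ⟨u, hu⟩, ⟨⟨u, hu⟩, rfl⟩, LinearMap.restrict_coe_apply x h ⟨u, hu⟩⟩

lemma finrank_comap_le [FiniteDimensional ℂ V] (f : Module.End ℂ V) (U : Submodule ℂ V) :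
    finrank ℂ (Submodule.comap f U) ≤ finrank ℂ (LinearMap.ker f) + finrank ℂ U := by
  set g : ↥(Submodule.comap f U) →ₗ[ℂ] V := f ∘ₗ (Submodule.comap f U).subtype with hg
  have h1 : finrank ℂ (LinearMap.range g) + finrank ℂ (LinearMap.ker g)
      = finrank ℂ (Submodule.comap f U) := LinearMap.finrank_range_add_finrank_ker g
  have h2 : finrank ℂ (LinearMap.range g) ≤ finrank ℂ U := by
    apply Submodule.finrank_mono
    rintro v ⟨w, rfl⟩
    exact w.2
  have h3 : finrank ℂ (LinearMap.ker g) ≤ finrank ℂ (LinearMap.ker f) := by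
    rw [← Submodule.finrank_map_subtype_eq (Submodule.comap f U) (LinearMap.ker g)]
    apply Submodule.finrank_mono
    rintro v ⟨w, hw, rfl⟩
    exact hw
  omega

lemma exists_intermediate [FiniteDimensional ℂ V] :
    ∀ (n : ℕ) (A B : Submodule ℂ V), A ≤ B → finrank ℂ A + n ≤ finrank ℂ B →
    ∃ C, A ≤ C ∧ C ≤ B ∧ finrank ℂ C = finrank ℂ A + n := by
  intro n
  induction n with
  | zero => exact fun A B hAB _ => ⟨A, le_refl A, hAB, by omega⟩
  | succ n ih =>
    intro A B hAB hle
    have hlt : A < B := lt_of_le_of_ne hAB (by rintro rfl; omega)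
    obtain ⟨v, hvB, hvA⟩ := SetLike.exists_of_lt hlt
    have hv0 : v ≠ 0 := fun h => hvA (h ▸ A.zero_mem)
    have hsp : finrank ℂ (Submodule.span ℂ ({v} : Set V)) = 1 := finrank_span_singleton hv0
    have hA'B : A ⊔ Submodule.span ℂ ({v} : Set V) ≤ B :=
      sup_le hAB ((Submodule.span_singleton_le_iff_mem v B).mpr hvB)
    have hub : finrank ℂ ↥(A ⊔ Submodule.span ℂ ({v} : Set V)) ≤ finrank ℂ A + 1 := by
      have := Submodule.finrank_sup_add_finrank_inf_eq A (Submodule.span ℂ ({v} : Set V))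
      omega
    have hlb : finrank ℂ A < finrank ℂ ↥(A ⊔ Submodule.span ℂ ({v} : Set V)) := by
      apply Submodule.finrank_lt_finrank_of_lt
      refine lt_of_le_of_ne le_sup_left (fun h => hvA ?_)
      rw [h]
      exact Submodule.mem_sup_right (Submodule.mem_span_singleton_self v)
    have hA' : finrank ℂ ↥(A ⊔ Submodule.span ℂ ({v} : Set V)) = finrank ℂ A + 1 := by omega
    obtain ⟨C, h1, h2, h3⟩ := ih (A ⊔ Submodule.span ℂ ({v} : Set V)) B hA'B (by omega)
    exact ⟨C, le_trans le_sup_left h1, h2, by omega⟩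

lemma flag_antitone {x : Module.End ℂ V} {parts : List ℕ} {F : ℕ → Submodule ℂ V}
    (hF : IsStableFlagOfType x parts F) : ∀ i j, i ≤ j → F j ≤ F i := by
  intro i j hij
  induction j, hij using Nat.le_induction with
  | base => exact le_rfl
  | succ j hj ihj => exact le_trans (hF.2.1 j) ihj

lemma flag_finrank [FiniteDimensional ℂ V] {x : Module.End ℂ V} {parts : List ℕ}
    {F : ℕ → Submodule ℂ V} (hF : IsStableFlagOfType x parts F) :
    ∀ j, finrank ℂ (F j) = (parts.drop j).sum := by
  have key : ∀ t j, parts.length ≤ j + t → finrank ℂ (F j) = (parts.drop j).sum := by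
    intro t
    induction t with
    | zero =>
      intro j hj
      rw [hF.2.2.1 j (by omega), List.drop_eq_nil_of_le (by omega)]
      simp
    | succ t ih =>
      intro j hj
      by_cases hjl : j < parts.length
      · have h1 := hF.2.2.2.1 j hjl
        have h2 := ih (j + 1) (by omega)
        have hdrop : parts.drop j = parts.getD j 0 :: parts.drop (j + 1) := by
          rw [List.drop_eq_getElem_cons hjl, List.getD_eq_getElem parts 0 hjl]
        rw [h1, h2, hdrop, List.sum_cons]
        omega
      · rw [hF.2.2.1 j (by omega), List.drop_eq_nil_of_le (by omega)]
        simp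
  exact fun j => key parts.length j (by omega)

lemma range_pow_le {x : Module.End ℂ V} {parts : List ℕ} {F : ℕ → Submodule ℂ V}
    (hF : IsStableFlagOfType x parts F) :
    ∀ k, LinearMap.range (x ^ k) ≤ F k := by
  intro k
  induction k with
  | zero => rw [hF.1]; exact le_top
  | succ k ih =>
    rw [pow_succ', Module.End.mul_eq_comp, LinearMap.range_comp]
    exact le_trans (Submodule.map_mono ih) (hF.2.2.2.2 k)

lemma transfer [FiniteDimensional ℂ V] (x : Module.End ℂ V) (l₁ l₂ : List ℕ)
    (F : ℕ → Submodule ℂ V) (hF : IsStableFlagOfType x (l₁ ++ l₂) F)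
    (huniq : ∀ G, IsStableFlagOfType x (l₁ ++ l₂) G → G = F)
    (hinv : ∀ v ∈ F l₁.length, x v ∈ F l₁.length) :
    IsStableFlagOfType (x.restrict hinv) l₂
        (fun i => Submodule.comap (F l₁.length).subtype (F (l₁.length + i))) ∧
      ∀ G', IsStableFlagOfType (x.restrict hinv) l₂ G' →
        G' = fun i => Submodule.comap (F l₁.length).subtype (F (l₁.length + i)) := by
  set m := l₁.length with hm
  set W := F m with hW
  have hlen : (l₁ ++ l₂).length = m + l₂.length := by simp [hm]
  have hchain := flag_antitone hF
  have hle : ∀ i, F (m + i) ≤ W := fun i => hchain m (m + i) (Nat.le_add_right _ _)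
  have hfinG : ∀ i, finrank ℂ (Submodule.comap W.subtype (F (m + i)))
      = finrank ℂ (F (m + i)) := by
    intro i
    rw [← Submodule.finrank_map_subtype_eq W, Submodule.map_comap_subtype,
      inf_eq_right.mpr (hle i)]
  constructor
  · refine ⟨?_, ?_, ?_, ?_, ?_⟩
    · show Submodule.comap W.subtype (F (m + 0)) = ⊤
      rw [Nat.add_zero, ← hW]
      exact Submodule.comap_subtype_self W
    · intro i
      exact Submodule.comap_mono (hF.2.1 (m + i))
    · intro i hi
      have hb : F (m + i) = ⊥ := hF.2.2.1 (m + i) (by omega)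
      show Submodule.comap W.subtype (F (m + i)) = ⊥
      rw [hb, Submodule.comap_bot, Submodule.ker_subtype]
    · intro i hi
      show finrank ℂ (Submodule.comap W.subtype (F (m + i)))
        = finrank ℂ (Submodule.comap W.subtype (F (m + (i + 1)))) + l₂.getD i 0
      rw [hfinG i, hfinG (i + 1)]
      have h1 := hF.2.2.2.1 (m + i) (by omega)
      have h2 : (l₁ ++ l₂).getD (m + i) 0 = l₂.getD i 0 := by
        rw [List.getD_append_right l₁ l₂ 0 (m + i) (by omega)]
        congr 1
        omega
      rw [h2] at h1
      exact h1
    · intro i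
      rintro v ⟨w, hw, rfl⟩
      show ((x.restrict hinv) w : V) ∈ F (m + (i + 1))
      rw [LinearMap.restrict_coe_apply]
      exact hF.2.2.2.2 (m + i) ⟨(w : V), hw, rfl⟩
  · intro G' hG'
    set H : ℕ → Submodule ℂ V := fun j => if j < m then F j else
      Submodule.map W.subtype (G' (j - m)) with hH
    have hHmap : ∀ i, H (m + i) = Submodule.map W.subtype (G' i) := by
      intro i
      simp only [hH, if_neg (by omega : ¬(m + i < m)), Nat.add_sub_cancel_left]
    have hHeq : ∀ j ≤ m, H j = F j := by
      intro j hj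
      by_cases h : j < m
      · simp [hH, h]
      · have hjm : j = m := by omega
        subst hjm
        have := hHmap 0
        rw [Nat.add_zero] at this
        rw [this, hG'.1, Submodule.map_top, Submodule.range_subtype]
    have hHflag : IsStableFlagOfType x (l₁ ++ l₂) H := by
      refine ⟨?_, ?_, ?_, ?_, ?_⟩
      · rw [hHeq 0 (by omega), hF.1]
      · intro j
        by_cases h : j + 1 ≤ m
        · rw [hHeq j (by omega), hHeq (j + 1) h]
          exact hF.2.1 j
        · have hj : m ≤ j := by omega
          have e1 : H (j + 1) = Submodule.map W.subtype (G' ((j - m) + 1)) := by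
            have := hHmap ((j - m) + 1)
            rwa [show m + ((j - m) + 1) = j + 1 by omega] at this
          have e2 : H j = Submodule.map W.subtype (G' (j - m)) := by
            have := hHmap (j - m)
            rwa [show m + (j - m) = j by omega] at this
          rw [e1, e2]
          exact Submodule.map_mono (hG'.2.1 _)
      · intro j hj
        rw [hlen] at hj
        have e2 : H j = Submodule.map W.subtype (G' (j - m)) := by
          have := hHmap (j - m)
          rwa [show m + (j - m) = j by omega] at this
        rw [e2, hG'.2.2.1 (j - m) (by omega), Submodule.map_bot]
      · intro j hj
        by_cases h : j < m
        · rw [hHeq j (by omega), hHeq (j + 1) (by omega)]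
          exact hF.2.2.2.1 j hj
        · rw [hlen] at hj
          have hij : j = m + (j - m) := by omega
          have hi : j - m < l₂.length := by omega
          rw [hij, hHmap (j - m), show m + (j - m) + 1 = m + ((j - m) + 1) by omega,
            hHmap ((j - m) + 1), Submodule.finrank_map_subtype_eq,
            Submodule.finrank_map_subtype_eq]
          have h1 := hG'.2.2.2.1 (j - m) hi
          have h2 : (l₁ ++ l₂).getD (m + (j - m)) 0 = l₂.getD (j - m) 0 := by
            rw [List.getD_append_right l₁ l₂ 0 (m + (j - m)) (by omega)]
            congr 1
            omega
          rw [h2]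
          exact h1
      · intro j
        by_cases h : j + 1 ≤ m
        · rw [hHeq j (by omega), hHeq (j + 1) h]
          exact hF.2.2.2.2 j
        · have hj : m ≤ j := by omega
          have e1 : H (j + 1) = Submodule.map W.subtype (G' ((j - m) + 1)) := by
            have := hHmap ((j - m) + 1)
            rwa [show m + ((j - m) + 1) = j + 1 by omega] at this
          have e2 : H j = Submodule.map W.subtype (G' (j - m)) := by
            have := hHmap (j - m)
            rwa [show m + (j - m) = j by omega] at this
          rw [e1, e2]
          rintro v ⟨u, ⟨w, hw, rfl⟩, rfl⟩
          refine ⟨(x.restrict hinv) w, hG'.2.2.2.2 (j - m) ⟨w, hw, rfl⟩, ?_⟩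
          exact LinearMap.restrict_coe_apply x hinv w
    have hHF := huniq H hHflag
    funext i
    have h1 : Submodule.map W.subtype (G' i) = F (m + i) := by
      rw [← hHmap i, hHF]
    calc G' i = Submodule.comap W.subtype (Submodule.map W.subtype (G' i)) :=
          (Submodule.comap_map_eq_of_injective (Submodule.injective_subtype W) _).symm
      _ = Submodule.comap W.subtype (F (m + i)) := by rw [h1]

lemma core : ∀ (d : List ℕ) {W : Type} [AddCommGroup W] [Module ℂ W]
    [FiniteDimensional ℂ W] (y : Module.End ℂ W) (G : ℕ → Submodule ℂ W),
    d.Pairwise (· ≥ ·) → IsStableFlagOfType y d G →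
    (∀ G', IsStableFlagOfType y d G' → G' = G) →
    ∀ k, finrank ℂ (LinearMap.ker (y ^ k)) = (d.take k).sum := by
  intro d
  induction d with
  | nil =>
    intro W _ _ _ y G _ hG _ k
    have htop : (⊤ : Submodule ℂ W) = ⊥ := by rw [← hG.1]; exact hG.2.2.1 0 (le_refl 0)
    have hker : LinearMap.ker (y ^ k) = ⊥ := le_bot_iff.mp (htop ▸ le_top)
    simp [hker]
  | cons d₀ d' ih =>
    intro W _ _ _ y G hsort hG huniq
    have hfr := flag_finrank hG
    have hn0 : finrank ℂ W = (d₀ :: d').sum := by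
      rw [← finrank_top ℂ W, ← hG.1]
      simpa using hfr 0
    have hrange := range_pow_le hG
    have hlow : ∀ k, ((d₀ :: d').take k).sum ≤ finrank ℂ (LinearMap.ker (y ^ k)) := by
      intro k
      have h1 := LinearMap.finrank_range_add_finrank_ker (y ^ k)
      have h2 : finrank ℂ (LinearMap.range (y ^ k)) ≤ ((d₀ :: d').drop k).sum :=
        (hfr k) ▸ Submodule.finrank_mono (hrange k)
      have h3 : finrank ℂ W = ((d₀ :: d').take k).sum + ((d₀ :: d').drop k).sum := by
        rw [← List.sum_append, List.take_append_drop, hn0]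
      omega
    match d' with
    | [] =>
      intro k
      match k with
      | 0 => rw [pow_zero]; simp [Module.End.one_eq_id, LinearMap.ker_id]; exact finrank_bot ℂ W
      | (k + 1) =>
        have hy : y = 0 := by
          ext w
          have h1 : y w ∈ G 1 := by
            have := hrange 1
            rw [pow_one] at this
            exact this ⟨w, rfl⟩
          rw [hG.2.2.1 1 (by simp)] at h1
          simpa using h1
        rw [hy, zero_pow (by omega), LinearMap.ker_zero]
        have : finrank ℂ (⊤ : Submodule ℂ W) = finrank ℂ W := finrank_top ℂ W
        rw [this, hn0]
        simp
    | (d₁ :: d'') =>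
      have hinv1 : ∀ v ∈ G 1, y v ∈ G 1 :=
        fun v hv => (hG.2.1 1) (hG.2.2.2.2 1 ⟨v, hv, rfl⟩)
      have hsort' : (d₁ :: d'').Pairwise (· ≥ ·) := (List.pairwise_cons.mp hsort).2
      have hd10 : d₁ ≤ d₀ :=
        (List.pairwise_cons.mp hsort).1 d₁ List.mem_cons_self
      have htr := transfer y [d₀] (d₁ :: d'') G hG huniq hinv1
      have hIH : ∀ k, finrank ℂ (LinearMap.ker ((y.restrict hinv1) ^ k))
          = ((d₁ :: d'').take k).sum := ih (y.restrict hinv1) _ hsort' htr.1 htr.2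
      have hker_int := map_ker_pow_restrict y hinv1
      have hKer1 : ∀ k, finrank ℂ ↥(LinearMap.ker (y ^ k) ⊓ G 1)
          = ((d₁ :: d'').take k).sum := by
        intro k
        rw [← hker_int k, Submodule.finrank_map_subtype_eq]
        exact hIH k
      have hrange_le_G1 : LinearMap.range y ≤ G 1 := by
        have := hG.2.2.2.2 0
        rw [hG.1] at this
        rw [LinearMap.range_eq_map]
        exact this
      -- y (G 1) = G 2
      have hG2range : Submodule.map y (G 1) = G 2 := by
        have hrn := LinearMap.finrank_range_add_finrank_ker (y.restrict hinv1)
        have h1 : finrank ℂ (LinearMap.ker (y.restrict hinv1)) = d₁ := by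
          have := hIH 1
          rw [pow_one] at this
          simpa using this
        have h2 : finrank ℂ (Submodule.map y (G 1))
            = finrank ℂ (LinearMap.range (y.restrict hinv1)) := by
          rw [← map_range_restrict y hinv1, Submodule.finrank_map_subtype_eq]
        have h3 : finrank ℂ (G 1) = d₁ + ((d₀ :: d₁ :: d'').drop 2).sum := by
          rw [hfr 1]; simp
        have h4 : finrank ℂ (G 2) = ((d₀ :: d₁ :: d'').drop 2).sum := hfr 2
        refine Submodule.eq_of_le_of_finrank_le (hG.2.2.2.2 1) (by omega)
      have hG2sub : G 2 ≤ LinearMap.range y := by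
        calc G 2 = Submodule.map y (G 1) := hG2range.symm
          _ ≤ Submodule.map y ⊤ := Submodule.map_mono le_top
          _ = LinearMap.range y := (LinearMap.range_eq_map y).symm
      have hker1 : finrank ℂ (LinearMap.ker y) = d₀ := by
        by_cases hA : G 1 = G 2 ⊔ LinearMap.range y
        · have hG1 : G 1 = LinearMap.range y :=
            le_antisymm (hA ▸ sup_le hG2sub le_rfl) hrange_le_G1
          have h1 := LinearMap.finrank_range_add_finrank_ker y
          have e1 : finrank ℂ (LinearMap.range y) = ((d₀ :: d₁ :: d'').drop 1).sum := by
            rw [← hG1]; exact hfr 1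
          have e2 : (d₀ :: d₁ :: d'').sum = d₀ + ((d₀ :: d₁ :: d'').drop 1).sum := by simp
          omega
        · by_cases hk : LinearMap.ker y ≤ G 1
          · have e1 : LinearMap.ker y ⊓ G 1 = LinearMap.ker y := inf_eq_left.mpr hk
            have e2 : finrank ℂ (LinearMap.ker y) = d₁ := by
              have := hKer1 1
              rw [pow_one, e1] at this
              simpa using this
            have e4 : d₀ ≤ finrank ℂ (LinearMap.ker y) := by
              have := hlow 1
              rw [pow_one] at this
              simpa using this
            omega
          · exfalso
            obtain ⟨v, hv_ker, hvG1⟩ := SetLike.not_le_iff_exists.mp hk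
            set A : Submodule ℂ W := G 2 ⊔ LinearMap.range y with hA_def
            have hA_le : A ≤ G 1 := sup_le (hG.2.1 1) hrange_le_G1
            have hA_lt : A < G 1 := lt_of_le_of_ne hA_le (fun h => hA h.symm)
            have hfA : finrank ℂ A < finrank ℂ (G 1) :=
              Submodule.finrank_lt_finrank_of_lt hA_lt
            have hv0 : v ≠ 0 := fun h => hvG1 (h ▸ (G 1).zero_mem)
            set S := Submodule.span ℂ ({v} : Set W) with hS_def
            have hSfr : finrank ℂ S = 1 := finrank_span_singleton hv0
            have hASfr : finrank ℂ ↥(A ⊔ S) ≤ finrank ℂ A + 1 := by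
              have := Submodule.finrank_sup_add_finrank_inf_eq A S
              omega
            have hle1 : A ⊔ S ≤ G 1 ⊔ S := sup_le_sup_right hA_le S
            have hle2 : finrank ℂ (G 1) ≤ finrank ℂ ↥(G 1 ⊔ S) :=
              Submodule.finrank_mono le_sup_left
            obtain ⟨C, hAC, hCB, hCfr⟩ := exists_intermediate
              (finrank ℂ (G 1) - finrank ℂ ↥(A ⊔ S)) (A ⊔ S) (G 1 ⊔ S) hle1 (by omega)
            have hCfr' : finrank ℂ C = finrank ℂ (G 1) := by omega
            have hvC : v ∈ C :=
              hAC (Submodule.mem_sup_right (Submodule.mem_span_singleton_self v))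
            have hCne : C ≠ G 1 := fun h => hvG1 (h ▸ hvC)
            have hyC : Submodule.map y C ≤ G 2 := by
              refine (Submodule.map_mono hCB).trans ?_
              rw [Submodule.map_sup]
              apply sup_le
              · exact le_of_eq hG2range
              · rw [Submodule.map_le_iff_le_comap, hS_def, Submodule.span_le]
                intro w hw
                rw [Set.mem_singleton_iff] at hw
                subst hw
                show y w ∈ G 2
                rw [LinearMap.mem_ker.mp hv_ker]
                exact (G 2).zero_mem
            have hG2C : G 2 ≤ C := le_trans (le_trans le_sup_left le_sup_left) hAC
            have hrC : LinearMap.range y ≤ C :=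
              le_trans (le_trans le_sup_right le_sup_left) hAC
            set G2' : ℕ → Submodule ℂ W := fun j => if j = 1 then C else G j with hG2'
            have hflag' : IsStableFlagOfType y (d₀ :: d₁ :: d'') G2' := by
              refine ⟨?_, ?_, ?_, ?_, ?_⟩
              · show (if (0 : ℕ) = 1 then C else G 0) = ⊤
                rw [if_neg (by omega)]
                exact hG.1
              · intro j
                match j with
                | 0 =>
                  show (if (1 : ℕ) = 1 then C else G 1) ≤ (if (0 : ℕ) = 1 then C else G 0)
                  rw [if_pos rfl, if_neg (by omega), hG.1]
                  exact le_top
                | 1 =>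
                  show (if (2 : ℕ) = 1 then C else G 2) ≤ (if (1 : ℕ) = 1 then C else G 1)
                  rw [if_pos rfl, if_neg (by omega)]
                  exact hG2C
                | (j + 2) =>
                  show (if j + 3 = 1 then C else G (j + 3))
                      ≤ (if j + 2 = 1 then C else G (j + 2))
                  rw [if_neg (by omega), if_neg (by omega)]
                  exact hG.2.1 (j + 2)
              · intro j hj
                simp only [List.length_cons] at hj
                show (if j = 1 then C else G j) = ⊥
                rw [if_neg (by omega)]
                exact hG.2.2.1 j (by simpa using hj)
              · intro j hj
                match j with
                | 0 =>
                  show finrank ℂ ↥(if (0 : ℕ) = 1 then C else G 0)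
                    = finrank ℂ ↥(if (1 : ℕ) = 1 then C else G 1) + _
                  rw [if_neg (by omega), if_pos rfl, hCfr']
                  exact hG.2.2.2.1 0 hj
                | 1 =>
                  show finrank ℂ ↥(if (1 : ℕ) = 1 then C else G 1)
                    = finrank ℂ ↥(if (2 : ℕ) = 1 then C else G 2) + _
                  rw [if_pos rfl, if_neg (by omega), hCfr']
                  exact hG.2.2.2.1 1 hj
                | (j + 2) =>
                  show finrank ℂ ↥(if j + 2 = 1 then C else G (j + 2))
                    = finrank ℂ ↥(if j + 3 = 1 then C else G (j + 3)) + _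
                  rw [if_neg (by omega), if_neg (by omega)]
                  exact hG.2.2.2.1 (j + 2) hj
              · intro j
                match j with
                | 0 =>
                  show Submodule.map y (if (0 : ℕ) = 1 then C else G 0)
                    ≤ (if (1 : ℕ) = 1 then C else G 1)
                  rw [if_neg (by omega), if_pos rfl, hG.1, ← LinearMap.range_eq_map]
                  exact hrC
                | 1 =>
                  show Submodule.map y (if (1 : ℕ) = 1 then C else G 1)
                    ≤ (if (2 : ℕ) = 1 then C else G 2)
                  rw [if_pos rfl, if_neg (by omega)]
                  exact hyC
                | (j + 2) =>
                  show Submodule.map y (if j + 2 = 1 then C else G (j + 2))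
                    ≤ (if j + 3 = 1 then C else G (j + 3))
                  rw [if_neg (by omega), if_neg (by omega)]
                  exact hG.2.2.2.2 (j + 2)
            have heq := huniq G2' hflag'
            have hC1 : C = G 1 := by
              have h := congrFun heq 1
              simpa [hG2'] using h
            exact hCne hC1
      intro k
      match k with
      | 0 => rw [pow_zero]; simp [Module.End.one_eq_id, LinearMap.ker_id]; exact finrank_bot ℂ W
      | (k + 1) =>
        have hsub : LinearMap.ker (y ^ (k + 1))
            ≤ Submodule.comap y
              (Submodule.map (G 1).subtype (LinearMap.ker ((y.restrict hinv1) ^ k))) := by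
          intro w hw
          rw [Submodule.mem_comap, hker_int k]
          refine ⟨LinearMap.mem_ker.mpr ?_, hrange_le_G1 ⟨w, rfl⟩⟩
          have hw2 := LinearMap.mem_ker.mp hw
          rw [pow_succ, Module.End.mul_apply] at hw2
          exact hw2
        have hup := (Submodule.finrank_mono hsub).trans (finrank_comap_le y _)
        have e : finrank ℂ (Submodule.map (G 1).subtype
            (LinearMap.ker ((y.restrict hinv1) ^ k))) = ((d₁ :: d'').take k).sum := by
          rw [Submodule.finrank_map_subtype_eq]
          exact hIH k
        have hl := hlow (k + 1)
        have ht : ((d₀ :: d₁ :: d'').take (k + 1)).sum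
            = d₀ + ((d₁ :: d'').take k).sum := by
          rw [List.take_succ_cons, List.sum_cons]
        omega

end StableFlagAux

/-- Let `x` be a nilpotent endomorphism and `(λ₁, λ₂)` a pair of
partitions (given by their part lists `l₁`, `l₂`, sorted decreasingly, with
positive parts).  Suppose `F` is a flag of type `(λ₁, λ₂)` stable under `x`
(`x (V_j) ⊆ V_{j+1}`) and that this flag is unique.  Then the restriction of
`x` to the middle subspace `V₂ = F (length l₁)` has Jordan type `λ₂^⊥`:
equivalently, `dim ker ((x|_{V₂})^k)` is the sum of the `k` largest parts of
`λ₂` for every `k`. -/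
theorem restriction_jordan_type_of_unique_flag
    {V : Type} [AddCommGroup V] [Module ℂ V] [FiniteDimensional ℂ V]
    (x : Module.End ℂ V) (hnil : IsNilpotent x)
    (l₁ l₂ : List ℕ)
    (hl₁sorted : l₁.Pairwise (· ≥ ·)) (hl₁pos : ∀ p ∈ l₁, 0 < p)
    (hl₂sorted : l₂.Pairwise (· ≥ ·)) (hl₂pos : ∀ p ∈ l₂, 0 < p)
    (F : ℕ → Submodule ℂ V)
    (hF : IsStableFlagOfType x (l₁ ++ l₂) F)
    (huniq : ∀ G : ℕ → Submodule ℂ V, IsStableFlagOfType x (l₁ ++ l₂) G → G = F)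
    (hinv : ∀ v ∈ F l₁.length, x v ∈ F l₁.length) :
    ∀ k, finrank ℂ (LinearMap.ker ((x.restrict hinv) ^ k)) = (l₂.take k).sum := by
  have h := StableFlagAux.transfer x l₁ l₂ F hF huniq hinv
  exact StableFlagAux.core l₂ (x.restrict hinv) _ hl₂sorted h.1 h.2
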